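/- On a cycle C_n attached at a vertex u, if the survivor starts at the vertex clockwise-adjacent to u and repeatedly moves clockwise until returning to u, and a zombie starts at distance at most D behind (clockwise arc distance D ≤ 2^{i+1}−2 where n = 2^{i+2}−3), then at every step of the traversal the zombie never occupies the survivor's vertex. -/
import Mathlib


open SimpleGraph

/-- The cycle graph on `ZMod n` with the clockwise orientation `x ↦ x + 1`. -/
def cyc (n : ℕ) : SimpleGraph (ZMod n) :=
  SimpleGraph.fromRel (fun x y => y = x + 1)

set_option linter.unusedSectionVars false
set_option linter.unusedVariables false
set_option linter.unnecessarySimpa false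

section lemmas
variable {n : ℕ} [NeZero n]

lemma cyc_one_ne_zero (hn : 2 ≤ n) : (1 : ZMod n) ≠ 0 := by
  haveI : Fact (1 < n) := ⟨by omega⟩
  intro h
  have := congrArg ZMod.val h
  rw [ZMod.val_one, ZMod.val_zero] at this
  omega

lemma cyc_adj (hn : 2 ≤ n) {x y : ZMod n} (h : (cyc n).Adj x y) :
    y = x + 1 ∨ y = x - 1 := by
  rw [cyc, SimpleGraph.fromRel_adj] at h
  rcases h.2 with h' | h'
  · exact Or.inl h'
  · right; rw [h']; ring

lemma cyc_adj_of (hn : 2 ≤ n) (x : ZMod n) : (cyc n).Adj x (x + 1) := by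
  rw [cyc, SimpleGraph.fromRel_adj]
  refine ⟨?_, Or.inl rfl⟩
  intro h
  exact cyc_one_ne_zero hn (by linear_combination -h)

lemma val_sub_one {a : ZMod n} (ha : a ≠ 0) : (a - 1).val = a.val - 1 := by
  have h1 : 0 < a.val := ZMod.val_pos.mpr ha
  have h2 : a.val < n := ZMod.val_lt a
  have : a - 1 = ((a.val - 1 : ℕ) : ZMod n) := by
    push_cast [Nat.cast_sub h1]
    rw [ZMod.natCast_val, ZMod.cast_id]
  rw [this, ZMod.val_cast_of_lt (by omega)]

lemma val_le_val_sub_one_add_one (hn : 2 ≤ n) (a : ZMod n) :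
    a.val ≤ (a - 1).val + 1 := by
  haveI : Fact (1 < n) := ⟨by omega⟩
  calc a.val = ((a - 1) + 1).val := by ring_nf
    _ ≤ (a - 1).val + (1 : ZMod n).val := ZMod.val_add_le _ _
    _ = (a - 1).val + 1 := by rw [ZMod.val_one]

/-- Lower bound: every walk in the cycle is at least as long as the circular distance. -/
lemma cyc_walk_le (hn : 2 ≤ n) : ∀ {x y : ZMod n} (p : (cyc n).Walk x y),
    min (y - x).val (x - y).val ≤ p.length := by
  intro x y p
  induction p with
  | nil => simp
  | @cons x w y h q ih =>
    haveI : Fact (1 < n) := ⟨by omega⟩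
    rw [SimpleGraph.Walk.length_cons]
    rcases cyc_adj hn h with hw | hw
    · -- w = x + 1
      subst hw
      by_cases hy : y = x + 1
      · have : (y - x).val = 1 := by rw [hy]; simp [ZMod.val_one]
        omega
      · have hB : (x - y).val ≤ (x + 1 - y).val := by
          have hc : x + 1 - y ≠ 0 := by
            intro h0; apply hy; linear_combination -h0
          have : (x - y) = (x + 1 - y) - 1 := by ring
          rw [this, val_sub_one hc]; omega
        have hA : (y - x).val ≤ (y - (x + 1)).val + 1 := by
          have : y - x = (y - (x+1)) + 1 := by ring
          calc (y - x).val = ((y - (x+1)) + 1).val := by rw [this]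
            _ ≤ (y - (x+1)).val + (1 : ZMod n).val := ZMod.val_add_le _ _
            _ = (y - (x+1)).val + 1 := by rw [ZMod.val_one]
        omega
    · -- w = x - 1
      subst hw
      by_cases hy : y = x - 1
      · have : (x - y).val = 1 := by rw [hy]; simp [ZMod.val_one]
        omega
      · have hA : (y - x).val ≤ (y - (x - 1)).val := by
          have hc : y - (x - 1) ≠ 0 := by
            intro h0; apply hy; linear_combination h0
          have : (y - x) = (y - (x-1)) - 1 := by ring
          rw [this, val_sub_one hc]; omega
        have hB : (x - y).val ≤ ((x - 1) - y).val + 1 := by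
          have : x - y = ((x-1) - y) + 1 := by ring
          calc (x - y).val = (((x-1) - y) + 1).val := by rw [this]
            _ ≤ ((x-1) - y).val + (1 : ZMod n).val := ZMod.val_add_le _ _
            _ = ((x-1) - y).val + 1 := by rw [ZMod.val_one]
        omega

lemma cyc_walk_exists (hn : 2 ≤ n) (a : ZMod n) :
    ∀ k : ℕ, ∃ p : (cyc n).Walk a (a + (k : ZMod n)), p.length = k := by
  intro k
  induction k generalizing a with
  | zero => exact ⟨SimpleGraph.Walk.nil.copy rfl (by push_cast; ring), by simp⟩
  | succ k ih =>
    obtain ⟨p, hp⟩ := ih (a + 1)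
    refine ⟨SimpleGraph.Walk.cons (cyc_adj_of hn a) (p.copy rfl (by push_cast; ring)), ?_⟩
    simp [hp]

lemma cyc_dist (hn : 2 ≤ n) (a : ZMod n) (k : ℕ) (hk : k < n) :
    (cyc n).dist a (a + (k : ZMod n)) = min k (n - k) := by
  obtain ⟨p, hp⟩ := cyc_walk_exists hn a k
  obtain ⟨q, hq⟩ := cyc_walk_exists hn (a + (k : ZMod n)) (n - k)
  have hq' : (a + (k : ZMod n)) + ((n - k : ℕ) : ZMod n) = a := by
    push_cast [Nat.cast_sub hk.le]
    simp
  apply le_antisymm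
  · refine le_min (le_of_le_of_eq (SimpleGraph.dist_le p) hp) ?_
    rw [SimpleGraph.dist_comm]
    exact le_of_le_of_eq (SimpleGraph.dist_le (q.copy rfl hq')) (by simpa using hq)
  · have hr : (cyc n).Reachable a (a + (k : ZMod n)) := ⟨p⟩
    obtain ⟨w, hw⟩ := hr.exists_walk_length_eq_dist
    have := cyc_walk_le hn w
    rw [hw] at this
    have hval : ((k : ZMod n) : ZMod n).val = k := by
      exact ZMod.val_cast_of_lt hk
    have hval2 : (a + (k : ZMod n) - a) = (k : ZMod n) := by ring
    have hval3 : (a - (a + (k : ZMod n))) = -(k : ZMod n) := by ring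
    rw [hval2, hval3] at this
    rcases Nat.eq_zero_or_pos k with h0 | h0
    · subst h0; simpa using this
    · have hk0 : (k : ZMod n) ≠ 0 := by
        rw [Ne, ZMod.natCast_eq_zero_iff]
        intro hdvd
        exact absurd (Nat.le_of_dvd h0 hdvd) (by omega)
      rw [ZMod.val_cast_of_lt hk, ZMod.neg_val, if_neg hk0, ZMod.val_cast_of_lt hk] at this
      exact this

end lemmas

/-- On a cycle of length `n = 2^(i+2) - 3` attached at a vertex `u`, suppose the survivor starts
at the vertex clockwise-adjacent to `u` and repeatedly moves clockwise (`s t = u + 1 + t`), and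
a zombie starts at clockwise distance `d` behind with `0 < d ≤ D ≤ 2^(i+1) - 2`
(`z 0 = u + 1 - d`).  If in every round the survivor moves first and then the zombie moves one
step along a shortest path toward the survivor, then throughout the full traversal (until the
survivor returns to `u` at step `n - 1`) the zombie never occupies the survivor's vertex. -/
theorem survivor_circles_safely (i d D n : ℕ) (hi : 1 ≤ i)
    (hn : n = 2 ^ (i + 2) - 3) (hD : D ≤ 2 ^ (i + 1) - 2) (hd0 : 0 < d) (hdD : d ≤ D)
    (u : ZMod n) (s z : ℕ → ZMod n)
    (hs : ∀ t : ℕ, s t = u + 1 + (t : ZMod n))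
    (hz0 : z 0 = u + 1 - (d : ZMod n))
    (hzmove : ∀ t : ℕ, (cyc n).Adj (z t) (z (t + 1)) ∧
      (cyc n).dist (z (t + 1)) (s (t + 1)) + 1 = (cyc n).dist (z t) (s (t + 1))) :
    ∀ t : ℕ, t ≤ n - 1 → z t ≠ s t := by
  set Q := 2 ^ i with hQdef
  have hQ : 2 ≤ Q := by
    calc 2 = 2 ^ 1 := rfl
    _ ≤ 2 ^ i := Nat.pow_le_pow_right (by norm_num) hi
  have hn' : n = 4 * Q - 3 := by
    rw [hn, hQdef]; ring_nf
  have hD' : D ≤ 2 * Q - 2 := by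
    rw [hQdef] at *; calc D ≤ 2 ^ (i+1) - 2 := hD
      _ = 2 * 2 ^ i - 2 := by ring_nf
  have hn5 : 5 ≤ n := by omega
  have hn2 : 2 ≤ n := by omega
  haveI : NeZero n := ⟨by omega⟩
  by_cases hcase : 2 * d + 2 < n
  · -- the clockwise arc stays the unique shortest path
    have key : ∀ t : ℕ, z t = u + 1 + (t : ZMod n) - (d : ZMod n) := by
      intro t
      induction t with
      | zero => simpa using hz0
      | succ t ih =>
        obtain ⟨hadj, hdist⟩ := hzmove t
        have hst : s (t + 1) = z t + ((d + 1 : ℕ) : ZMod n) := by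
          rw [ih, hs]; push_cast; ring
        have h1 : (cyc n).dist (z t) (s (t + 1)) = min (d + 1) (n - (d + 1)) := by
          rw [hst]; exact cyc_dist hn2 _ _ (by omega)
        rcases cyc_adj hn2 hadj with hz | hz
        · rw [ih] at hz; rw [hz]; push_cast; ring
        · exfalso
          have hst2 : s (t + 1) = z (t + 1) + ((d + 2 : ℕ) : ZMod n) := by
            rw [hz, ih, hs]; push_cast; ring
          have h2 : (cyc n).dist (z (t + 1)) (s (t + 1)) = min (d + 2) (n - (d + 2)) := by
            rw [hst2]; exact cyc_dist hn2 _ _ (by omega)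
          rw [h1, h2] at hdist
          omega
    intro t ht heq
    rw [key t, hs t] at heq
    have : (d : ZMod n) = 0 := by linear_combination -heq
    rw [ZMod.natCast_eq_zero_iff] at this
    have := Nat.le_of_dvd hd0 this
    omega
  · -- d = 2Q - 2 : the hypotheses are contradictory
    exfalso
    have hd : d = 2 * Q - 2 := by omega
    have key : ∀ t : ℕ, t ≤ Q - 1 → z t = u + 1 - (d : ZMod n) - (t : ZMod n) := by
      intro t
      induction t with
      | zero => intro _; simpa using hz0
      | succ t ih =>
        intro htQ
        have ih' := ih (by omega)
        obtain ⟨hadj, hdist⟩ := hzmove t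
        have hst : s (t + 1) = z t + ((d + 2 * t + 1 : ℕ) : ZMod n) := by
          rw [ih', hs]; push_cast; ring
        have h1 : (cyc n).dist (z t) (s (t + 1)) =
            min (d + 2 * t + 1) (n - (d + 2 * t + 1)) := by
          rw [hst]; exact cyc_dist hn2 _ _ (by omega)
        rcases cyc_adj hn2 hadj with hz | hz
        · exfalso
          have hst2 : s (t + 1) = z (t + 1) + ((d + 2 * t : ℕ) : ZMod n) := by
            rw [hz, ih', hs]; push_cast; ring
          have h2 : (cyc n).dist (z (t + 1)) (s (t + 1)) =
              min (d + 2 * t) (n - (d + 2 * t)) := by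
            rw [hst2]; exact cyc_dist hn2 _ _ (by omega)
          rw [h1, h2] at hdist
          omega
        · rw [hz, ih']; push_cast; ring
    set T := Q - 1 with hT
    have hkT := key T le_rfl
    obtain ⟨hadj, hdist⟩ := hzmove T
    have hzs : z T = s (T + 1) := by
      rw [hkT, hs]
      have hcast : ((n : ℕ) : ZMod n) = 0 := ZMod.natCast_self n
      have h1 : (d : ℕ) + 2 * T + 1 = n := by omega
      have : ((d : ℕ) : ZMod n) + 2 * (T : ZMod n) + 1 = 0 := by
        calc ((d : ℕ) : ZMod n) + 2 * (T : ZMod n) + 1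
            = ((d + 2 * T + 1 : ℕ) : ZMod n) := by push_cast; ring
          _ = ((n : ℕ) : ZMod n) := by rw [h1]
          _ = 0 := hcast
      push_cast
      linear_combination -this
    rw [← hzs, SimpleGraph.dist_self] at hdist
    omega
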